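/- In the two-state Markov chain setting with identity matrix P, perturbed matrix P̃ (flip probability ε ∈ (0,1)), initial distributions μ({1}) = p and μ̃({1}) = p - δ: if p = 1 and δ ∈ (0,1), then for every n ≥ 0, ‖ℙⁿ - ℙ̃ⁿ‖ = 2(f_n(ε) + δ(1 - f_n(ε))) where f_n(ε) = 1 - (1-ε)ⁿ; in particular the bound of the multiplicative perturbation theorem is attained with equality. -/

import Mathlib

open MeasureTheory ProbabilityTheory
open scoped ENNReal

/-- Total mass (as a real number) of a measure. -/
noncomputable def mass {X : Type*} [MeasurableSpace X] (μ : Measure X) : ℝ :=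
  (μ Set.univ).toReal

/-- Total variation distance `‖ν - ν'‖` between two finite measures. -/
noncomputable def tvDist {X : Type*} [MeasurableSpace X] (ν ν' : Measure X)
    [IsFiniteMeasure ν] [IsFiniteMeasure ν'] : ℝ :=
  (((ν.toSignedMeasure - ν'.toSignedMeasure).totalVariation) Set.univ).toReal

/-- The minimum `ν ∧ ν' := ν - (ν - ν')⁻` of two finite measures, via the
Hahn–Jordan decomposition of `ν - ν'`. -/
noncomputable def measInf {X : Type*} [MeasurableSpace X] (ν ν' : Measure X)
    [IsFiniteMeasure ν] [IsFiniteMeasure ν'] : Measure X :=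
  ν - (ν.toSignedMeasure - ν'.toSignedMeasure).toJordanDecomposition.negPart

/-- `chainLaw μ P Pr` says that `Pr n` is the law on `{0,1}^{n+1}` of the first
`n+1` states of the chain with initial distribution `μ` and one-step
history-dependent kernels `P`. -/
def chainLaw (μ : Measure (Fin 2)) (P : ∀ k : ℕ, Kernel (Fin (k + 1) → Fin 2) (Fin 2))
    (Pr : ∀ n : ℕ, Measure (Fin (n + 1) → Fin 2)) : Prop :=
  Pr 0 = μ.map (fun x => fun _ : Fin 1 => x) ∧
    ∀ n, Pr (n + 1) = ((Pr n) ⊗ₘ (P n)).map (fun q => Fin.snoc q.1 q.2)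

/-- `isIdentityKernel P` : the chain moves deterministically, staying in its
current state (identity transition matrix). -/
def isIdentityKernel (P : ∀ k : ℕ, Kernel (Fin (k + 1) → Fin 2) (Fin 2)) : Prop :=
  ∀ k ω, P k ω = Measure.dirac (ω (Fin.last k))

/-- `isFlipKernel ε P` : at each step the chain stays with probability `1 - ε`
and flips with probability `ε`. -/
def isFlipKernel (ε : ℝ) (P : ∀ k : ℕ, Kernel (Fin (k + 1) → Fin 2) (Fin 2)) : Prop :=
  ∀ k ω, P k ω = ENNReal.ofReal (1 - ε) • Measure.dirac (ω (Fin.last k)) +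
    ENNReal.ofReal ε • Measure.dirac (ω (Fin.last k) + 1)

lemma tv_of_dirac {X : Type*} [MeasurableSpace X] [MeasurableSingletonClass X]
    (ν ν' : Measure X) [IsProbabilityMeasure ν] [IsProbabilityMeasure ν'] (a : X)
    (h : ν {a} = 1) : tvDist ν ν' = 2 * (1 - (ν' {a}).toReal) := by
  have hcompl : ν {a}ᶜ = 0 := by
    rw [measure_compl (measurableSet_singleton a) (measure_ne_top ν _), h,
      measure_univ, tsub_self]
  have hν : ν = Measure.dirac a := by
    ext A hA
    rw [Measure.dirac_apply' _ hA]
    by_cases ha : a ∈ A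
    · simp only [Set.indicator_of_mem ha, Pi.one_apply]
      refine le_antisymm prob_le_one ?_
      rw [← h]
      exact measure_mono (Set.singleton_subset_iff.2 ha)
    · simp only [Set.indicator_of_notMem ha]
      have : A ⊆ {a}ᶜ := fun x hx => by
        simp only [Set.mem_compl_iff, Set.mem_singleton_iff]
        rintro rfl; exact ha hx
      exact le_antisymm (hcompl ▸ measure_mono this) zero_le
  set κ : ℝ≥0∞ := 1 - ν' {a} with hκ
  have hκle : ν' {a} ≤ 1 := prob_le_one
  have hκne : κ ≠ ∞ := by
    refine ne_of_lt (lt_of_le_of_lt tsub_le_self ENNReal.one_lt_top)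
  haveI hfin : IsFiniteMeasure (κ • Measure.dirac a) := by
    refine ⟨?_⟩
    rw [Measure.smul_apply, smul_eq_mul]
    exact ENNReal.mul_lt_top hκne.lt_top (by simp)
  have hsing : (κ • Measure.dirac a) ⟂ₘ (ν'.restrict {a}ᶜ) := by
    refine ⟨{a}ᶜ, (measurableSet_singleton a).compl, ?_, ?_⟩
    · rw [Measure.smul_apply, Measure.dirac_apply' _ (measurableSet_singleton a).compl]
      simp
    · rw [Measure.restrict_apply (measurableSet_singleton a).compl.compl]
      simp
  set j : JordanDecomposition X := ⟨κ • Measure.dirac a, ν'.restrict {a}ᶜ, hsing⟩ with hj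
  have hAdd : ∀ A : Set X, MeasurableSet A → a ∈ A →
      ν' A = ν' {a} + ν' (A ∩ {a}ᶜ) := by
    intro A hA ha
    have : A = {a} ∪ (A ∩ {a}ᶜ) := by
      ext x; by_cases hx : x = a <;> simp [hx, ha]
    have hdisj : Disjoint ({a} : Set X) (A ∩ {a}ᶜ) :=
      Set.disjoint_left.2 (fun x hx hx' => hx'.2 hx)
    conv_lhs => rw [this]
    rw [measure_union hdisj (hA.inter (measurableSet_singleton a).compl)]
  have heq : ν.toSignedMeasure - ν'.toSignedMeasure = j.toSignedMeasure := by
    ext A hA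
    rw [VectorMeasure.sub_apply, JordanDecomposition.toSignedMeasure,
      VectorMeasure.sub_apply, Measure.toSignedMeasure_apply_measurable hA,
      Measure.toSignedMeasure_apply_measurable hA,
      Measure.toSignedMeasure_apply_measurable hA,
      Measure.toSignedMeasure_apply_measurable hA]
    show (ν A).toReal - (ν' A).toReal
      = ((κ • Measure.dirac a) A).toReal - ((ν'.restrict {a}ᶜ) A).toReal
    rw [hν, Measure.dirac_apply' _ hA, Measure.smul_apply, smul_eq_mul,
      Measure.dirac_apply' _ hA, Measure.restrict_apply hA]
    by_cases ha : a ∈ A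
    · simp only [Set.indicator_of_mem ha, Pi.one_apply, mul_one]
      rw [hAdd A hA ha, ENNReal.toReal_add (measure_ne_top _ _) (measure_ne_top _ _),
        hκ, ENNReal.toReal_sub_of_le hκle ENNReal.one_ne_top]
      simp only [ENNReal.toReal_one]; ring
    · simp only [Set.indicator_of_notMem ha, mul_zero]
      have : A ∩ {a}ᶜ = A := by
        ext x; simp only [Set.mem_inter_iff, Set.mem_compl_iff, Set.mem_singleton_iff,
          and_iff_left_iff_imp]
        rintro hx rfl; exact ha hx
      rw [this]
  have hJD := SignedMeasure.toJordanDecomposition_eq heq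
  rw [tvDist, SignedMeasure.totalVariation, hJD]
  have h1 : j.posPart Set.univ = κ := by
    show (κ • Measure.dirac a) Set.univ = κ
    simp
  have h2 : j.negPart Set.univ = 1 - ν' {a} := by
    show (ν'.restrict {a}ᶜ) Set.univ = _
    rw [Measure.restrict_apply MeasurableSet.univ, Set.univ_inter,
      measure_compl (measurableSet_singleton a) (measure_ne_top ν' _), measure_univ]
  rw [Measure.add_apply, h1, h2, ← hκ, ENNReal.toReal_add hκne hκne,
    hκ, ENNReal.toReal_sub_of_le hκle ENNReal.one_ne_top]
  simp; ring

lemma snoc_preimage' (n : ℕ) :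
    (fun q : (Fin (n+1) → Fin 2) × Fin 2 => (Fin.snoc q.1 q.2 : Fin (n+2) → Fin 2)) ⁻¹'
      {fun _ => 1} = {fun _ => (1 : Fin 2)} ×ˢ {1} := by
  ext ⟨q, x⟩
  simp only [Set.mem_preimage, Set.mem_singleton_iff, Set.mem_prod]
  constructor
  · intro hqx
    constructor
    · funext i
      have := congrFun hqx (Fin.castSucc i)
      rwa [Fin.snoc_castSucc] at this
    · have := congrFun hqx (Fin.last (n+1))
      rwa [Fin.snoc_last] at this
  · rintro ⟨rfl, rfl⟩
    funext i
    refine Fin.lastCases ?_ ?_ i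
    · rw [Fin.snoc_last]
    · intro j; rw [Fin.snoc_castSucc]

lemma map_preimage' (n : ℕ) :
    (fun x : Fin 2 => fun _ : Fin (n+1) => x) ⁻¹' {fun _ => 1} = {1} := by
  ext x
  simp only [Set.mem_preimage, Set.mem_singleton_iff]
  constructor
  · intro hx; exact congrFun hx ⟨0, Nat.succ_pos n⟩
  · rintro rfl; rfl


/-- Two-state chain with `p = 1`, `δ ∈ (0,1)`:
`‖ℙⁿ − ℙ̃ⁿ‖ = 2(f_n(ε) + δ(1 − f_n(ε)))` with `f_n(ε) = 1 − (1 − ε)ⁿ`;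
the multiplicative perturbation bound is attained with equality. -/
theorem stmt15 (δ ε : ℝ) (hδ : δ ∈ Set.Ioo (0 : ℝ) 1) (hε : ε ∈ Set.Ioo (0 : ℝ) 1)
    (μ μ' : Measure (Fin 2)) [IsProbabilityMeasure μ] [IsProbabilityMeasure μ']
    (hμ : μ {1} = 1) (hμ' : μ' {1} = ENNReal.ofReal (1 - δ))
    (P P' : ∀ k : ℕ, Kernel (Fin (k + 1) → Fin 2) (Fin 2))
    [∀ k, IsMarkovKernel (P k)] [∀ k, IsMarkovKernel (P' k)]
    (hP : isIdentityKernel P) (hP' : isFlipKernel ε P')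
    (Pr Pr' : ∀ n : ℕ, Measure (Fin (n + 1) → Fin 2))
    [∀ n, IsProbabilityMeasure (Pr n)] [∀ n, IsProbabilityMeasure (Pr' n)]
    (hPr : chainLaw μ P Pr) (hPr' : chainLaw μ' P' Pr') :
    ∀ n : ℕ, tvDist (Pr n) (Pr' n) =
      2 * ((1 - (1 - ε) ^ n) + δ * (1 - (1 - (1 - ε) ^ n))) := by
  obtain ⟨hδ0, hδ1⟩ := hδ
  obtain ⟨hε0, hε1⟩ := hε
  have h1 : ∀ n : ℕ, Pr n {fun _ => (1 : Fin 2)} = 1 := by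
    intro n
    induction n with
    | zero =>
      rw [hPr.1, Measure.map_apply (measurable_of_countable _) (measurableSet_singleton _),
        map_preimage' 0, hμ]
    | succ n ih =>
      rw [hPr.2 n, Measure.map_apply (measurable_of_countable _) (measurableSet_singleton _),
        snoc_preimage' n,
        Measure.compProd_apply_prod (measurableSet_singleton _) (measurableSet_singleton _),
        lintegral_singleton, hP n, ih, mul_one]
      simp [Measure.dirac_apply]
  have h2 : ∀ n : ℕ, Pr' n {fun _ => (1 : Fin 2)} =
      ENNReal.ofReal (1 - δ) * ENNReal.ofReal (1 - ε) ^ n := by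
    intro n
    induction n with
    | zero =>
      rw [hPr'.1, Measure.map_apply (measurable_of_countable _) (measurableSet_singleton _),
        map_preimage' 0, hμ', pow_zero, mul_one]
    | succ n ih =>
      rw [hPr'.2 n, Measure.map_apply (measurable_of_countable _) (measurableSet_singleton _),
        snoc_preimage' n,
        Measure.compProd_apply_prod (measurableSet_singleton _) (measurableSet_singleton _),
        lintegral_singleton, hP' n, ih]
      have h11 : ((fun _ => (1:Fin 2)) (Fin.last n) + 1 : Fin 2) = 0 := rfl
      rw [h11]
      simp only [Measure.add_apply, Measure.smul_apply, smul_eq_mul,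
        Measure.dirac_apply, Set.indicator_of_mem (Set.mem_singleton _),
        Pi.one_apply]
      have h01 : (0 : Fin 2) ∉ ({1} : Set (Fin 2)) := by decide
      rw [Set.indicator_of_notMem h01]
      ring
  intro n
  rw [tv_of_dirac (Pr n) (Pr' n) _ (h1 n), h2 n, ENNReal.toReal_mul, ENNReal.toReal_pow,
    ENNReal.toReal_ofReal (by linarith), ENNReal.toReal_ofReal (by linarith)]
  ring
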